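/- Let f_n minimize (up to tolerance β) the empirical squared loss on dataset D_n, and suppose: (i) whenever the model is updated at episodes n_i < n_{i+1}, one has ∑_{(z,y) ∈ D_{n_{i+1}} \ D_{n_i}} [(f_{n_i}(z) − y)² − (f*(z) − y)²] ≥ 3β; and (ii) pointwise, (f(z) − y)² − (f*(z) − y)² ≤ (3/2)(f(z) − f*(z))² + β/l over the new data. Then between consecutive updates ∑_{n = n_i}^{n_{i+1}−1} (f_n(z_n) − f*(z_n))² ≥ β, so if the total sum ∑_{n=1}^N (f_n(z_n) − f*(z_n))² ≤ U, the number of updates l satisfies l ≤ U/β. -/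

import Mathlib

open Finset

/-- Switching-cost counting argument: between consecutive update times each block
contributes at least `β` to the on-sequence squared error, hence the number of
updates `l` is at most `U/β` whenever the total on-sequence squared error is `≤ U`. -/
theorem switching_cost_bound
    {Z : Type*} (l N : ℕ) (nt : Fin (l + 1) → ℕ) (hmono : StrictMono nt)
    (hlast : nt (Fin.last l) ≤ N)
    (f : ℕ → Z → ℝ) (fstar : Z → ℝ) (z : ℕ → Z) (y : ℕ → ℝ) (β U : ℝ)
    (hβ : 0 < β)
    -- `f` is piecewise constant between updates
    (hconst : ∀ i : Fin l, ∀ n, nt i.castSucc ≤ n → n < nt i.succ →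
      f n = f (nt i.castSucc))
    -- (i) each update is triggered by an excess empirical loss of at least `3β` on new data
    (hgap : ∀ i : Fin l,
      3 * β ≤ ∑ n ∈ Finset.Ico (nt i.castSucc) (nt i.succ),
        ((f (nt i.castSucc) (z n) - y n) ^ 2 - (fstar (z n) - y n) ^ 2)) :
    -- (ii) the empirical excess loss on new data is at most `(3/2)` times the squared
    -- prediction error plus `β`
    (∀ i : Fin l,
      ∑ n ∈ Finset.Ico (nt i.castSucc) (nt i.succ),
          ((f (nt i.castSucc) (z n) - y n) ^ 2 - (fstar (z n) - y n) ^ 2) ≤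
        (3 / 2) * (∑ n ∈ Finset.Ico (nt i.castSucc) (nt i.succ),
          (f (nt i.castSucc) (z n) - fstar (z n)) ^ 2) + β) →
    -- then each inter-update block contributes at least `β`, and `l ≤ U/β` when the
    -- total on-sequence squared error is at most `U`
    (∀ i : Fin l,
        β ≤ ∑ n ∈ Finset.Ico (nt i.castSucc) (nt i.succ),
          (f n (z n) - fstar (z n)) ^ 2) ∧
      ((∑ n ∈ Finset.range N, (f n (z n) - fstar (z n)) ^ 2 ≤ U) →
        (l : ℝ) ≤ U / β) := by
  intro hii
  have hblock : ∀ i : Fin l,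
      β ≤ ∑ n ∈ Finset.Ico (nt i.castSucc) (nt i.succ),
        (f n (z n) - fstar (z n)) ^ 2 := by
    intro i
    have hsum : ∑ n ∈ Finset.Ico (nt i.castSucc) (nt i.succ),
        (f n (z n) - fstar (z n)) ^ 2
        = ∑ n ∈ Finset.Ico (nt i.castSucc) (nt i.succ),
        (f (nt i.castSucc) (z n) - fstar (z n)) ^ 2 := by
      refine Finset.sum_congr rfl ?_
      intro n hn
      rw [Finset.mem_Ico] at hn
      rw [hconst i n hn.1 hn.2]
    rw [hsum]
    have h1 := hgap i
    have h2 := hii i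
    linarith
  refine ⟨hblock, ?_⟩
  intro hU
  rw [le_div_iff₀ hβ]
  have hdisj : ((Finset.univ : Finset (Fin l)) : Set (Fin l)).PairwiseDisjoint
      (fun i => Finset.Ico (nt i.castSucc) (nt i.succ)) := by
    have key : ∀ i j : Fin l, (i : ℕ) < (j : ℕ) →
        Disjoint (Finset.Ico (nt i.castSucc) (nt i.succ))
          (Finset.Ico (nt j.castSucc) (nt j.succ)) := by
      intro i j hlt
      rw [Finset.disjoint_left]
      intro n hn hn'
      rw [Finset.mem_Ico] at hn hn'
      have hle : nt i.succ ≤ nt j.castSucc :=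
        hmono.monotone (by simp [Fin.le_def]; omega)
      omega
    intro i _ j _ hij
    rcases lt_or_gt_of_ne (fun h : (i : ℕ) = (j : ℕ) => hij (Fin.ext h)) with h | h
    · exact key i j h
    · exact (key j i h).symm
  have hsum_eq : ∑ i : Fin l, ∑ n ∈ Finset.Ico (nt i.castSucc) (nt i.succ),
      (f n (z n) - fstar (z n)) ^ 2
      = ∑ n ∈ (Finset.univ : Finset (Fin l)).biUnion
        (fun i => Finset.Ico (nt i.castSucc) (nt i.succ)),
        (f n (z n) - fstar (z n)) ^ 2 :=
    (Finset.sum_biUnion hdisj).symm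
  have hsubset : (Finset.univ : Finset (Fin l)).biUnion
      (fun i => Finset.Ico (nt i.castSucc) (nt i.succ)) ⊆ Finset.range N := by
    intro n hn
    rw [Finset.mem_biUnion] at hn
    obtain ⟨i, _, hn⟩ := hn
    rw [Finset.mem_Ico] at hn
    have : nt i.succ ≤ nt (Fin.last l) := hmono.monotone (by
      simp [Fin.le_def])
    rw [Finset.mem_range]
    omega
  have hle2 : ∑ n ∈ (Finset.univ : Finset (Fin l)).biUnion
      (fun i => Finset.Ico (nt i.castSucc) (nt i.succ)),
      (f n (z n) - fstar (z n)) ^ 2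
      ≤ ∑ n ∈ Finset.range N, (f n (z n) - fstar (z n)) ^ 2 :=
    Finset.sum_le_sum_of_subset_of_nonneg hsubset (fun n _ _ => sq_nonneg _)
  have hlb : (l : ℝ) * β ≤ ∑ i : Fin l, ∑ n ∈ Finset.Ico (nt i.castSucc) (nt i.succ),
      (f n (z n) - fstar (z n)) ^ 2 := by
    calc (l : ℝ) * β = ∑ _i : Fin l, β := by
          simp [Finset.sum_const, mul_comm]
    _ ≤ _ := Finset.sum_le_sum (fun i _ => hblock i)
  linarith [hsum_eq ▸ hlb]
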